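/- Let T be the complete binary tree of height n*+1 (nodes are binary sequences of length ≤ n*) endowed with a probability tree structure, i.e., for each non-maximal node t a probability distribution on its two successors. Let Y : Lev_{n*}(T) → ℝ be defined by Y(t) := |{ n < n* : t(n) = 0 }|. If there exists p ∈ [0,1] such that for every non-maximal t, the probability p_t of the successor t⌢⟨0⟩ satisfies p ≤ p_t, then for every z ∈ ℝ, Pr[Y ≤ z] ≤ Pr[B_{n*,p} ≤ z], where B_{n*,p} has binomial distribution with parameters n* and p. -/

import Mathlib

noncomputable def Ltree (n : ℕ) (f : (m : ℕ) → (Fin m → Bool) → ℝ) (z : ℝ) : ℝ :=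
  ∑ t ∈ Finset.univ.filter (fun t : Fin n → Bool =>
      (((Finset.univ.filter fun m : Fin n => t m = false).card : ℝ) ≤ z)),
    ∏ m : Fin n,
      (if t m = false then f m.1 (fun i => t (Fin.castLE m.isLt.le i))
       else 1 - f m.1 (fun i => t (Fin.castLE m.isLt.le i)))

lemma cast_eq_cons (n : ℕ) (b : Bool) (s : Fin n → Bool) (m : Fin n) :
    ((fun i => (Fin.cons b s : Fin (n+1) → Bool) (Fin.castLE (m.succ : Fin (n+1)).isLt.le i)) : Fin ((m:ℕ)+1) → Bool)
      = (Fin.cons b (fun j : Fin (m : ℕ) => s (Fin.castLE m.isLt.le j)) : Fin ((m:ℕ)+1) → Bool) := by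
  funext i
  induction i using Fin.cases with
  | zero => simp
  | succ j =>
      have h : Fin.castLE (m.succ : Fin (n+1)).isLt.le j.succ
          = Fin.succ (Fin.castLE m.isLt.le j) := by
        apply Fin.ext; simp
      rw [h, Fin.cons_succ, Fin.cons_succ]

lemma Ltree_succ (n : ℕ) (f : (m : ℕ) → (Fin m → Bool) → ℝ) (z : ℝ) :
    Ltree (n+1) f z =
      f 0 ![] * Ltree n (fun m s => f (m+1) (Fin.cons false s)) (z - 1)
      + (1 - f 0 ![]) * Ltree n (fun m s => f (m+1) (Fin.cons true s)) z := by
  simp only [Ltree, Finset.sum_filter]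
  rw [← (Fin.consEquiv (fun _ : Fin (n+1) => Bool)).sum_comp]
  rw [Fintype.sum_prod_type, Fintype.sum_bool]
  simp only [Fin.consEquiv_apply]
  have key : ∀ (b : Bool) (s : Fin n → Bool),
      (if (((Finset.filter (fun m : Fin (n+1) => (Fin.cons b s : Fin (n+1) → Bool) m = false) Finset.univ).card : ℝ) ≤ z) then
         ∏ m : Fin (n+1), (if (Fin.cons b s : Fin (n+1) → Bool) m = false then f m.1 (fun i => (Fin.cons b s : Fin (n+1) → Bool) (Fin.castLE m.isLt.le i)) else 1 - f m.1 (fun i => (Fin.cons b s : Fin (n+1) → Bool) (Fin.castLE m.isLt.le i)))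
       else 0)
    = (if b = false then f 0 ![] else 1 - f 0 ![]) *
      (if (((Finset.filter (fun m : Fin n => s m = false) Finset.univ).card : ℝ) ≤ z - (if b = false then 1 else 0)) then
         ∏ m : Fin n, (if s m = false then f (m.1+1) ((Fin.cons b (fun i => s (Fin.castLE m.isLt.le i)) : Fin (m.1+1) → Bool)) else 1 - f (m.1+1) ((Fin.cons b (fun i => s (Fin.castLE m.isLt.le i)) : Fin (m.1+1) → Bool)))
       else 0) := by
    intro b s
    have hcard : (Finset.filter (fun m : Fin (n+1) => (Fin.cons b s : Fin (n+1) → Bool) m = false) Finset.univ).card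
        = (if b = false then 1 else 0) + (Finset.filter (fun m : Fin n => s m = false) Finset.univ).card := by
      rw [Finset.card_filter, Finset.card_filter, Fin.sum_univ_succ]
      simp [Fin.cons_succ, Fin.cons_zero]
    have hprod : (∏ m : Fin (n+1), (if (Fin.cons b s : Fin (n+1) → Bool) m = false then f m.1 (fun i => (Fin.cons b s : Fin (n+1) → Bool) (Fin.castLE m.isLt.le i)) else 1 - f m.1 (fun i => (Fin.cons b s : Fin (n+1) → Bool) (Fin.castLE m.isLt.le i))))
        = (if b = false then f 0 ![] else 1 - f 0 ![]) *
          ∏ m : Fin n, (if s m = false then f (m.1+1) ((Fin.cons b (fun i => s (Fin.castLE m.isLt.le i)) : Fin (m.1+1) → Bool)) else 1 - f (m.1+1) ((Fin.cons b (fun i => s (Fin.castLE m.isLt.le i)) : Fin (m.1+1) → Bool))) := by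
      rw [Fin.prod_univ_succ]
      have h0 : ∀ g : Fin ((0 : Fin (n+1)) : ℕ) → Bool, f ((0 : Fin (n+1)) : ℕ) g = f 0 ![] := by
        intro g
        congr 1
        funext i
        exact i.elim0
      congr 1
      · simp only [Fin.cons_zero]
        rw [h0]
      · apply Finset.prod_congr rfl
        intro m _
        simp only [Fin.cons_succ, Fin.val_succ]
        rw [cast_eq_cons n b s m]
    rw [hcard, hprod]
    have hcond : ((((if b = false then 1 else 0) + (Finset.filter (fun m : Fin n => s m = false) Finset.univ).card : ℕ) : ℝ) ≤ z)
        ↔ (((Finset.filter (fun m : Fin n => s m = false) Finset.univ).card : ℝ) ≤ z - (if b = false then 1 else 0)) := by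
      cases b <;> simp <;> push_cast <;> constructor <;> intro <;> linarith
    rw [mul_ite, mul_zero, if_congr hcond rfl rfl]
  rw [Finset.sum_congr rfl (fun s _ => key true s), Finset.sum_congr rfl (fun s _ => key false s)]
  simp only [← Finset.mul_sum]
  norm_num
  ring

noncomputable def Bsum (p : ℝ) (n : ℕ) (z : ℝ) : ℝ :=
  ∑ i ∈ (Finset.range (n + 1)).filter (fun i : ℕ => (i : ℝ) ≤ z),
    (n.choose i : ℝ) * p ^ i * (1 - p) ^ (n - i)

lemma Bsum_pascal (p z : ℝ) (n : ℕ) :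
    Bsum p (n+1) z = p * Bsum p n (z-1) + (1 - p) * Bsum p n z := by
  simp only [Bsum, Finset.sum_filter, Finset.mul_sum]
  rw [Finset.sum_range_succ' _ (n+1),
      Finset.sum_range_succ' (fun i => (1-p) * (if ((i:ℝ) ≤ z) then ((n.choose i : ℝ)) * p ^ i * (1 - p) ^ (n - i) else 0)) n]
  have key : ∀ i ∈ Finset.range (n+1),
      (if (((i+1 : ℕ) : ℝ) ≤ z) then (((n+1).choose (i+1) : ℝ)) * p ^ (i+1) * (1-p) ^ (n+1-(i+1)) else 0)
    = p * (if ((i:ℝ) ≤ z - 1) then ((n.choose i : ℝ)) * p ^ i * (1-p) ^ (n-i) else 0)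
      + (1-p) * (if (((i+1:ℕ):ℝ) ≤ z) then ((n.choose (i+1) : ℝ)) * p ^ (i+1) * (1-p) ^ (n-(i+1)) else 0) := by
    intro i hi
    rw [Finset.mem_range] at hi
    have hc : ((i:ℝ) ≤ z - 1) ↔ (((i+1:ℕ):ℝ) ≤ z) := by push_cast; constructor <;> intro <;> linarith
    have hch : (((n+1).choose (i+1)) : ℝ) = ((n.choose i : ℝ)) + ((n.choose (i+1) : ℝ)) := by
      rw [Nat.choose_succ_succ]; push_cast; ring
    simp only [hc]
    rcases Nat.lt_or_ge i n with h | h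
    · have h1 : n - i = (n - (i+1)) + 1 := by omega
      have h2 : n + 1 - (i+1) = n - i := by omega
      split_ifs with hz
      · rw [hch, h2, h1]; ring
      · ring
    · have h2 : i = n := by omega
      subst h2
      simp only [Nat.choose_succ_self, Nat.cast_zero, Nat.choose_self, Nat.sub_self,
        Nat.add_sub_cancel, Nat.cast_one]
      split_ifs with hz <;> ring
  rw [Finset.sum_congr rfl key, Finset.sum_add_distrib]
  rw [Finset.sum_range_succ (fun i => (1-p) * (if (((i+1:ℕ):ℝ) ≤ z) then ((n.choose (i+1) : ℝ)) * p ^ (i+1) * (1-p) ^ (n-(i+1)) else 0)) n]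
  simp [Nat.choose_succ_self]
  split_ifs <;> ring

lemma Bsum_mono (p : ℝ) (hp0 : 0 ≤ p) (hp1 : p ≤ 1) (n : ℕ) {z1 z2 : ℝ} (h : z1 ≤ z2) :
    Bsum p n z1 ≤ Bsum p n z2 := by
  apply Finset.sum_le_sum_of_subset_of_nonneg
  · apply Finset.monotone_filter_right
    intro i _ hi
    exact le_trans hi h
  · intro i _ _
    apply mul_nonneg (mul_nonneg (by positivity) (by positivity))
    exact pow_nonneg (by linarith) _

lemma Ltree_le_Bsum (p : ℝ) (hp0 : 0 ≤ p) (hp1 : p ≤ 1) :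
    ∀ (n : ℕ) (f : (m : ℕ) → (Fin m → Bool) → ℝ),
      (∀ m, m < n → ∀ t : Fin m → Bool, f m t ≤ 1 ∧ p ≤ f m t) →
      ∀ z, Ltree n f z ≤ Bsum p n z := by
  intro n
  induction n with
  | zero =>
      intro f _ z
      simp only [Ltree, Bsum]
      simp [Finset.sum_filter]
      split_ifs <;> simp
  | succ n ih =>
      intro f hf z
      rw [Ltree_succ, Bsum_pascal]
      have h0 := hf 0 (Nat.succ_pos n) ![]
      have hA := ih (fun m s => f (m+1) (Fin.cons false s))
        (fun m hm s => hf (m+1) (by omega) _) (z-1)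
      have hB := ih (fun m s => f (m+1) (Fin.cons true s))
        (fun m hm s => hf (m+1) (by omega) _) z
      have hAB : Bsum p n (z-1) ≤ Bsum p n z := Bsum_mono p hp0 hp1 n (by linarith)
      have hf0nn : 0 ≤ f 0 ![] := le_trans hp0 h0.2
      have h1 : f 0 ![] * Ltree n (fun m s => f (m+1) (Fin.cons false s)) (z-1)
          ≤ f 0 ![] * Bsum p n (z-1) := mul_le_mul_of_nonneg_left hA hf0nn
      have h2 : (1 - f 0 ![]) * Ltree n (fun m s => f (m+1) (Fin.cons true s)) z
          ≤ (1 - f 0 ![]) * Bsum p n z :=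
        mul_le_mul_of_nonneg_left hB (by linarith [h0.1])
      have h3 : 0 ≤ (f 0 ![] - p) * (Bsum p n z - Bsum p n (z-1)) :=
        mul_nonneg (by linarith [h0.2]) (by linarith)
      nlinarith [h1, h2, h3]




/-- Comparison with the binomial distribution in probability trees: let `T` be the
complete binary tree of height `nstar + 1` with a probability tree structure, where
the node `t` of length `m < nstar` gives probability `f m t` to its successor
`t⌢⟨0⟩` (and `1 - f m t` to `t⌢⟨1⟩`, here `false` plays the role of `0`).  The
induced measure of a top-level node `t : Fin nstar → Bool` is the product of the
transition probabilities along its path.  Let `Y t = |{ m < nstar : t m = 0 }|`.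
If `p ∈ [0,1]` and `p ≤ f m t` for every non-maximal node, then for every `z ∈ ℝ`,
`Pr[Y ≤ z] ≤ Pr[B_{nstar, p} ≤ z]` where `B_{nstar,p}` is binomial. -/
theorem stmt15 (nstar : ℕ) (f : (m : ℕ) → (Fin m → Bool) → ℝ) (p : ℝ)
    (hp0 : 0 ≤ p) (hp1 : p ≤ 1)
    (hf : ∀ m, m < nstar → ∀ t : Fin m → Bool, f m t ≤ 1 ∧ p ≤ f m t) :
    ∀ z : ℝ,
      (∑ t ∈ Finset.univ.filter (fun t : Fin nstar → Bool =>
          (((Finset.univ.filter fun m : Fin nstar => t m = false).card : ℝ) ≤ z)),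
        ∏ m : Fin nstar,
          (if t m = false then f m.1 (fun i => t (Fin.castLE m.isLt.le i))
           else 1 - f m.1 (fun i => t (Fin.castLE m.isLt.le i)))) ≤
      ∑ i ∈ (Finset.range (nstar + 1)).filter (fun i : ℕ => (i : ℝ) ≤ z),
        (nstar.choose i : ℝ) * p ^ i * (1 - p) ^ (nstar - i) := by
  intro z
  exact Ltree_le_Bsum p hp0 hp1 nstar f hf z
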